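/- arXiv:0710.5360 — 2 statements merged into one kernel-verified Lean document; each statement's English description precedes it below -/
import Mathlib

section
/- Σ_{n=1}^{∞} H_n / n² = 2ζ(3), where H_n = Σ_{k=1}^n 1/k is the n-th harmonic number and ζ is the Riemann zeta function. -/
/-- The n-th harmonic number `H_n = ∑_{k=1}^n 1/k`. -/
noncomputable def H (n : ℕ) : ℝ := ∑ k ∈ Finset.Icc 1 n, (1 : ℝ) / k

lemma H_eq (n : ℕ) : H n = ∑ i ∈ Finset.range n, (1:ℝ)/(i+1) := by
  unfold H
  rw [show Finset.Icc 1 n = Finset.Ico 1 (n+1) by rw [Finset.Ico_add_one_right_eq_Icc],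
    Finset.sum_Ico_eq_sum_range]
  simp [add_comm]

lemma H_succ (n : ℕ) : H (n+1) = H n + 1/(n+1) := by
  unfold H
  rw [Finset.sum_Icc_succ_top (by omega)]
  push_cast
  ring

lemma H_zero : H 0 = 0 := by simp [H]

lemma H_nonneg (n : ℕ) : 0 ≤ H n := by
  rw [H_eq]; positivity

lemma H_mono {m n : ℕ} (h : m ≤ n) : H m ≤ H n := by
  rw [H_eq, H_eq]
  apply Finset.sum_le_sum_of_subset_of_nonneg (Finset.range_subset_range.2 h)
  intros; positivity

lemma H_le_sqrt (n : ℕ) : H n ≤ 2 * Real.sqrt n := by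
  induction n with
  | zero => simp [H_zero]
  | succ n ih =>
    rw [H_succ]
    set s := Real.sqrt n with hs_def
    set t := Real.sqrt ((n:ℕ)+1 : ℕ) with ht_def
    have hs : s ^ 2 = n := Real.sq_sqrt (by positivity)
    have ht : t ^ 2 = (n:ℝ)+1 := by
      rw [ht_def, Real.sq_sqrt (by positivity)]; push_cast; ring
    have hs0 : 0 ≤ s := Real.sqrt_nonneg _
    have ht0 : 0 ≤ t := Real.sqrt_nonneg _
    have hst : s ≤ t := by
      rw [hs_def, ht_def]; exact Real.sqrt_le_sqrt (by push_cast; linarith)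
    have ht1 : 1 ≤ t := by nlinarith
    have key : 1/((n:ℝ)+1) ≤ 2 * (t - s) := by
      rw [div_le_iff₀ (by positivity)]
      nlinarith [mul_nonneg (sub_nonneg.2 hst) (show (0:ℝ) ≤ 2*t^2 - t - s by nlinarith)]
    push_cast
    linarith

open Filter Topology

/-- telescoping: ∑_k (1/(k+1) - 1/(k+m+1)) = ∑_{i<m} 1/(i+1) -/
lemma telescope (m : ℕ) :
    HasSum (fun k : ℕ => (1:ℝ)/(k+1) - 1/(k+m+1)) (∑ i ∈ Finset.range m, (1:ℝ)/(i+1)) := by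
  set g : ℕ → ℝ := fun k => (1:ℝ)/(k+1) with hg
  rw [hasSum_iff_tendsto_nat_of_nonneg]
  · have hpart : ∀ N, m ≤ N → ∑ k ∈ Finset.range N, ((1:ℝ)/(k+1) - 1/(k+m+1))
        = ∑ i ∈ Finset.range m, g i - ∑ i ∈ Finset.Ico N (N+m), g i := by
      intro N hN
      have h1 : ∀ k : ℕ, (1:ℝ)/(k+1) - 1/(k+m+1) = g k - g (m+k) := by
        intro k; simp only [hg]; push_cast; ring_nf
      rw [Finset.sum_congr rfl (fun k _ => h1 k), Finset.sum_sub_distrib]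
      have h4 : ∑ x ∈ Finset.range N, g (m+x) = ∑ i ∈ Finset.Ico m (N+m), g i := by
        rw [Finset.sum_Ico_eq_sum_range, Nat.add_sub_cancel]
      rw [h4]
      have h2 : ∑ k ∈ Finset.range N, g k
          = ∑ i ∈ Finset.range m, g i + ∑ i ∈ Finset.Ico m N, g i := by
        rw [Finset.range_eq_Ico, ← Finset.sum_Ico_consecutive _ (Nat.zero_le m) hN,
          ← Finset.range_eq_Ico]
      have h3 : ∑ i ∈ Finset.Ico m (N+m), g i
          = ∑ i ∈ Finset.Ico m N, g i + ∑ i ∈ Finset.Ico N (N+m), g i := by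
        rw [Finset.sum_Ico_consecutive _ hN (by omega)]
      rw [h2, h3]; ring
    have htail : Tendsto (fun N => ∑ i ∈ Finset.Ico N (N+m), g i) atTop (𝓝 0) := by
      have hb1 : ∀ N : ℕ, 0 ≤ ∑ i ∈ Finset.Ico N (N+m), g i :=
        fun N => Finset.sum_nonneg fun i _ => by positivity
      have hb2 : ∀ N : ℕ, ∑ i ∈ Finset.Ico N (N+m), g i ≤ (m:ℝ) / (N+1) := by
        intro N
        have : ∀ i ∈ Finset.Ico N (N+m), g i ≤ 1/((N:ℝ)+1) := by
          intro i hi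
          simp only [hg]
          apply div_le_div_of_nonneg_left one_pos.le (by positivity)
          have := (Finset.mem_Ico.1 hi).1
          push_cast; linarith [(Nat.cast_le (α := ℝ)).2 this]
        calc ∑ i ∈ Finset.Ico N (N+m), g i ≤ ∑ i ∈ Finset.Ico N (N+m), 1/((N:ℝ)+1) :=
              Finset.sum_le_sum this
          _ = (m:ℝ) / (N+1) := by
              rw [Finset.sum_const, Nat.card_Ico]
              simp [nsmul_eq_mul]; ring
      have hb3 : Tendsto (fun N : ℕ => (m:ℝ) / (N+1)) atTop (𝓝 0) := by
        have := (tendsto_const_div_atTop_nhds_zero_nat (m:ℝ)).comp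
          (tendsto_add_atTop_nat 1)
        simpa [Function.comp_def] using this
      exact squeeze_zero hb1 hb2 hb3
    have : Tendsto (fun N => ∑ i ∈ Finset.range m, g i - ∑ i ∈ Finset.Ico N (N+m), g i)
        atTop (𝓝 (∑ i ∈ Finset.range m, g i)) := by
      simpa using tendsto_const_nhds.sub htail
    apply this.congr'
    filter_upwards [eventually_ge_atTop m] with N hN
    exact (hpart N hN).symm
  · intro k
    have : (1:ℝ)/(k+m+1) ≤ 1/(k+1) :=
      div_le_div_of_nonneg_left one_pos.le (by positivity) (by push_cast; linarith)
    linarith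

noncomputable def wf (p : ℕ × ℕ) : ℝ :=
  1 / (((p.1:ℝ)+1) * ((p.2:ℝ)+1) * ((p.1:ℝ)+(p.2:ℝ)+2))

noncomputable def vf (p : ℕ × ℕ) : ℝ :=
  1 / (((p.1:ℝ)+1) * ((p.1:ℝ)+(p.2:ℝ)+2)^2)

lemma wf_nonneg (p : ℕ × ℕ) : 0 ≤ wf p := by unfold wf; positivity
lemma vf_nonneg (p : ℕ × ℕ) : 0 ≤ vf p := by unfold vf; positivity

lemma wf_symm (a b : ℕ) : wf (a, b) = wf (b, a) := by unfold wf; ring_nf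

lemma wf_eq_vv (p : ℕ × ℕ) : wf p = vf p + vf p.swap := by
  obtain ⟨a, b⟩ := p
  unfold wf vf
  have h1 : ((a:ℝ)+1) ≠ 0 := by positivity
  have h2 : ((b:ℝ)+1) ≠ 0 := by positivity
  have h3 : ((a:ℝ)+(b:ℝ)+2) ≠ 0 := by positivity
  simp only [Prod.swap_prod_mk]
  field_simp
  ring

lemma vf_le_wf (p : ℕ × ℕ) : vf p ≤ wf p := by
  obtain ⟨a, b⟩ := p
  unfold wf vf
  apply div_le_div_of_nonneg_left one_pos.le (by simp only []; positivity)
  simp only []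
  nlinarith [mul_nonneg (mul_nonneg (show (0:ℝ) ≤ (a:ℝ)+1 by positivity)
    (show (0:ℝ) ≤ (a:ℝ)+1 by positivity)) (show (0:ℝ) ≤ (a:ℝ)+(b:ℝ)+2 by positivity)]

/-- the inner sum over the first coordinate -/
lemma hasSum_wf (m : ℕ) :
    HasSum (fun k : ℕ => wf (k, m)) (H (m+1) / ((m:ℝ)+1)^2) := by
  have h := (telescope (m+1)).mul_left (1/((m:ℝ)+1)^2)
  have he : ∀ k : ℕ, 1/((m:ℝ)+1)^2 * ((1:ℝ)/(k+1) - 1/(k+(m+1)+1)) = wf (k, m) := by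
    intro k
    unfold wf
    have h1 : ((k:ℝ)+1) ≠ 0 := by positivity
    have h2 : ((m:ℝ)+1) ≠ 0 := by positivity
    have h3 : ((k:ℝ)+((m:ℝ)+1)+1) ≠ 0 := by positivity
    push_cast
    field_simp
    ring
  have hv : 1/((m:ℝ)+1)^2 * (∑ i ∈ Finset.range (m+1), (1:ℝ)/(i+1))
      = H (m+1) / ((m:ℝ)+1)^2 := by
    rw [H_eq]; ring
  rw [← hv]
  apply h.congr_fun
  intro k
  rw [← he k]
  push_cast
  ring_nf

lemma summable_S : Summable (fun m : ℕ => H (m+1) / ((m:ℝ)+1)^2) := by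
  have hs : Summable (fun m : ℕ => 2 * ((m:ℝ)+1) ^ (-(3/2) : ℝ)) := by
    apply Summable.mul_left
    have h0 : Summable (fun n : ℕ => ((n:ℝ)) ^ (-(3/2) : ℝ)) := by
      rw [Real.summable_nat_rpow]; norm_num
    have := (summable_nat_add_iff 1).2 h0
    apply this.congr
    intro n; push_cast; ring_nf
  apply Summable.of_nonneg_of_le (fun m => div_nonneg (H_nonneg _) (by positivity)) _ hs
  intro m
  set x : ℝ := (m:ℝ)+1 with hx
  have hm : (0:ℝ) ≤ (m:ℝ) := Nat.cast_nonneg m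
  have hx1 : (1:ℝ) ≤ x := by rw [hx]; linarith
  have hx0 : (0:ℝ) < x := by linarith
  have hH : H (m+1) ≤ 2 * Real.sqrt x := by
    have h := H_le_sqrt (m+1)
    rw [hx]
    push_cast at h
    exact h
  have hsq : Real.sqrt x = x ^ ((1:ℝ)/2) := Real.sqrt_eq_rpow x
  calc H (m+1) / x^2 ≤ (2 * Real.sqrt x) / x^2 := by
        apply div_le_div_of_nonneg_right hH (by positivity)
    _ = 2 * (x ^ ((1:ℝ)/2) * (x^(2:ℝ))⁻¹) := by
        rw [hsq, ← Real.rpow_natCast x 2]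
        push_cast
        ring
    _ = 2 * x ^ (-(3/2) : ℝ) := by
        rw [← Real.rpow_neg hx0.le, ← Real.rpow_add hx0]
        norm_num

lemma summable_wf : Summable wf := by
  rw [summable_prod_of_nonneg wf_nonneg]
  constructor
  · intro k
    exact ((hasSum_wf k).congr_fun (fun m => wf_symm k m)).summable
  · exact summable_S.congr fun x =>
      (((hasSum_wf x).congr_fun (fun y => wf_symm x y)).tsum_eq).symm

lemma summable_vf : Summable vf :=
  Summable.of_nonneg_of_le vf_nonneg vf_le_wf summable_wf

lemma D_eq_S : ∑' p : ℕ × ℕ, wf p = ∑' n : ℕ, H (n+1) / ((n:ℝ)+1)^2 := by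
  rw [Summable.tsum_prod summable_wf]
  apply tsum_congr
  intro a
  exact ((hasSum_wf a).congr_fun (fun y => wf_symm a y)).tsum_eq

lemma D_eq_2T : ∑' p : ℕ × ℕ, wf p = 2 * ∑' p : ℕ × ℕ, vf p := by
  have hswap : Summable (fun p : ℕ × ℕ => vf p.swap) :=
    (Equiv.prodComm ℕ ℕ).summable_iff.2 summable_vf
  calc ∑' p : ℕ × ℕ, wf p = ∑' p : ℕ × ℕ, (vf p + vf p.swap) := tsum_congr wf_eq_vv
    _ = (∑' p : ℕ × ℕ, vf p) + ∑' p : ℕ × ℕ, vf p.swap := Summable.tsum_add summable_vf hswap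
    _ = 2 * ∑' p : ℕ × ℕ, vf p := by
        have h : ∑' p : ℕ × ℕ, vf p.swap = ∑' p : ℕ × ℕ, vf p :=
          (Equiv.prodComm ℕ ℕ).tsum_eq vf
        rw [h]
        ring

open Finset in
lemma T_eq : ∑' p : ℕ × ℕ, vf p = ∑' n : ℕ, H (n+1) / ((n:ℝ)+2)^2 := by
  rw [← (Finset.HasAntidiagonal.sigmaAntidiagonalEquivProd (A := ℕ)).tsum_eq vf]
  erw [Summable.tsum_sigma ((Finset.HasAntidiagonal.sigmaAntidiagonalEquivProd (A := ℕ)).summable_iff.2 summable_vf)]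
  apply tsum_congr
  intro n
  rw [tsum_fintype]
  have h1 : ∑ c : (Finset.HasAntidiagonal.antidiagonal n : Finset (ℕ × ℕ)),
      (vf ∘ (Finset.HasAntidiagonal.sigmaAntidiagonalEquivProd (A := ℕ))) ⟨n, c⟩
      = ∑ p ∈ Finset.HasAntidiagonal.antidiagonal n, vf p := by
    apply Finset.sum_coe_sort
  rw [h1, Finset.Nat.sum_antidiagonal_eq_sum_range_succ_mk]
  have h2 : ∀ i ∈ Finset.range (n+1), vf (i, n - i) = (1:ℝ)/(i+1) / ((n:ℝ)+2)^2 := by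
    intro i hi
    have hi' : i ≤ n := by simpa [Nat.lt_succ_iff] using hi
    unfold vf
    have : ((n - i : ℕ) : ℝ) = (n:ℝ) - (i:ℝ) := by
      rw [Nat.cast_sub hi']
    simp only [this]
    have h3 : ((i:ℝ)+1) ≠ 0 := by positivity
    have h4 : ((n:ℝ)+2) ≠ 0 := by positivity
    field_simp
    rw [show (i:ℝ) + ((n:ℝ) - i) + 2 = n + 2 by ring, div_self (pow_ne_zero 2 h4)]
  rw [Finset.sum_congr rfl h2, ← Finset.sum_div, ← H_eq]

lemma summable_zeta3 : Summable (fun n : ℕ => 1 / ((n:ℝ)+1)^3) := by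
  have h0 : Summable (fun n : ℕ => 1 / ((n:ℝ))^3) := by
    rw [Real.summable_one_div_nat_pow]; norm_num
  have := (summable_nat_add_iff 1).2 h0
  apply this.congr
  intro n; push_cast; ring_nf

lemma S_eq_2zeta3 : ∑' n : ℕ, H (n+1) / ((n:ℝ)+1)^2 = 2 * ∑' n : ℕ, 1 / ((n:ℝ)+1)^3 := by
  set S := ∑' n : ℕ, H (n+1) / ((n:ℝ)+1)^2 with hS
  set Z := ∑' n : ℕ, 1 / ((n:ℝ)+1)^3 with hZ
  have hsum2 : Summable (fun n : ℕ => H n / ((n:ℝ)+1)^2) := by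
    apply Summable.of_nonneg_of_le (fun n => div_nonneg (H_nonneg _) (by positivity)) _ summable_S
    intro n
    exact div_le_div_of_nonneg_right (H_mono (Nat.le_succ n)) (by positivity)
  have hsplit : S = Z + ∑' n : ℕ, H n / ((n:ℝ)+1)^2 := by
    rw [hS, hZ, ← Summable.tsum_add summable_zeta3 hsum2]
    apply tsum_congr
    intro n
    rw [H_succ]
    have h1 : ((n:ℝ)+1) ≠ 0 := by positivity
    push_cast
    field_simp
    ring
  have hshift : ∑' n : ℕ, H n / ((n:ℝ)+1)^2 = ∑' n : ℕ, H (n+1) / ((n:ℝ)+2)^2 := by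
    rw [Summable.tsum_eq_zero_add hsum2]
    simp only [H_zero]
    rw [zero_div, zero_add]
    apply tsum_congr
    intro n
    push_cast
    ring_nf
  have hT : S = 2 * ∑' n : ℕ, H (n+1) / ((n:ℝ)+2)^2 := by
    rw [hS, ← D_eq_S, D_eq_2T, T_eq]
  rw [hshift] at hsplit
  linarith

theorem stmt_5 :
    ((∑' n : ℕ, H (n + 1) / ((n : ℝ) + 1) ^ 2 : ℝ) : ℂ) = 2 * riemannZeta 3 := by
  have hz : riemannZeta 3 = ∑' n : ℕ, 1 / ((n:ℂ)+1)^3 := by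
    rw [zeta_eq_tsum_one_div_nat_add_one_cpow (by norm_num)]
    apply tsum_congr
    intro n
    rw [show (3:ℂ) = ((3:ℕ):ℂ) by norm_num, Complex.cpow_natCast]
  rw [hz, S_eq_2zeta3]
  push_cast [Complex.ofReal_tsum]
  ring
end

section
/- ∫₀¹ (log u)/(1-u) · Li₂(-(1-u)/u) du = (17/4)·ζ(4), where Li₂ is the dilogarithm and ζ is the Riemann zeta function. -/
open Real MeasureTheory intervalIntegral Set Filter

lemma measurable_h : Measurable (fun s : ℝ => Real.log (1 - s) / s) :=
  (Real.measurable_log.comp (measurable_const.sub measurable_id)).div measurable_id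

lemma h_bound_neg {s : ℝ} (hs : s ≤ 0) : |Real.log (1 - s) / s| ≤ 1 := by
  rcases eq_or_lt_of_le hs with rfl | hs
  · simp
  · have h1 : 0 ≤ Real.log (1 - s) := Real.log_nonneg (by linarith)
    have h2 : Real.log (1 - s) ≤ -s := by
      have := Real.log_le_sub_one_of_pos (x := 1 - s) (by linarith)
      linarith
    rw [abs_div, abs_of_nonneg h1, abs_of_neg hs, div_le_one (by linarith)]
    linarith

lemma h_bound_pos {s c : ℝ} (h0 : 0 ≤ s) (hsc : s ≤ c) (hc : c < 1) :
    |Real.log (1 - s) / s| ≤ (1 - c)⁻¹ := by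
  have hc0 : 0 < 1 - c := by linarith
  rcases eq_or_lt_of_le h0 with rfl | hs
  · simpa using inv_nonneg.mpr (by linarith : (0:ℝ) ≤ 1 - c)
  · have hs1 : s < 1 := lt_of_le_of_lt hsc hc
    have h1 : Real.log (1 - s) ≤ 0 := Real.log_nonpos (by linarith) (by linarith)
    have h2 : -Real.log (1 - s) ≤ s / (1 - s) := by
      have hl : Real.log (1 - s)⁻¹ ≤ (1 - s)⁻¹ - 1 :=
        Real.log_le_sub_one_of_pos (inv_pos.mpr (by linarith))
      rw [Real.log_inv] at hl
      have hne : (1:ℝ) - s ≠ 0 := by linarith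
      have he : (1 - s)⁻¹ - 1 = s / (1 - s) := by field_simp; ring
      linarith [he ▸ hl]
    rw [abs_div, abs_of_nonpos h1, abs_of_pos hs, div_le_iff₀ hs]
    have h3 : s / (1 - s) ≤ s / (1 - c) := by
      apply div_le_div_of_nonneg_left h0 hc0 (by linarith)
    calc -Real.log (1 - s) ≤ s / (1 - s) := h2
      _ ≤ s / (1 - c) := h3
      _ = (1 - c)⁻¹ * s := by rw [div_eq_inv_mul]


lemma abs_log_le_rpow {u : ℝ} (h0 : 0 < u) (h1 : u ≤ 1) {k : ℕ} (hk : k ≠ 0) :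
    |Real.log u| ^ k ≤ (2*k:ℝ) ^ k * u ^ (-(1:ℝ)/2) := by
  have hk1 : (1:ℝ) ≤ k := by exact_mod_cast Nat.one_le_iff_ne_zero.mpr hk
  have hk0 : (0:ℝ) < 2*k := by linarith
  set e : ℝ := -(1:ℝ)/(2*k) with he
  have hepos : 0 < u ^ e := Real.rpow_pos_of_pos h0 _
  have hlog : -Real.log u ≤ 2*k * u ^ e := by
    have h := Real.log_le_sub_one_of_pos hepos
    rw [Real.log_rpow h0] at h
    have h2 := mul_le_mul_of_nonneg_left h hk0.le
    have h3 : 2*(k:ℝ) * (e * Real.log u) = -Real.log u := by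
      rw [he]; field_simp
    rw [h3] at h2
    nlinarith
  have habs : |Real.log u| = -Real.log u := abs_of_nonpos (Real.log_nonpos h0.le h1)
  calc |Real.log u| ^ k ≤ (2*k * u ^ e) ^ k := by
        rw [habs]
        apply pow_le_pow_left₀ (neg_nonneg.mpr (Real.log_nonpos h0.le h1)) (habs ▸ hlog)
    _ = (2*k:ℝ)^k * (u ^ e)^k := mul_pow _ _ _
    _ = (2*k:ℝ)^k * u ^ (-(1:ℝ)/2) := by
        rw [← Real.rpow_natCast (u ^ e) k, ← Real.rpow_mul h0.le]
        congr 1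
        have hkne : (k:ℝ) ≠ 0 := by linarith
        rw [he]
        rw [div_mul_eq_mul_div, neg_div, mul_comm]
        congr 1
        field_simp

lemma intInt_abs_log_pow (k : ℕ) : IntervalIntegrable (fun u => |Real.log u| ^ k) volume 0 1 := by
  rcases eq_or_ne k 0 with rfl | hk
  · simpa using _root_.intervalIntegrable_const (c := (1:ℝ)) (μ := volume) (a := 0) (b := 1)
  · apply IntervalIntegrable.mono_fun'
      (g := fun u : ℝ => (2*k:ℝ)^k * u ^ (-(1:ℝ)/2))
      ((intervalIntegrable_rpow' (by norm_num)).const_mul _)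
      (Real.measurable_log.abs.pow_const k).aestronglyMeasurable
    rw [uIoc_of_le (by norm_num : (0:ℝ) ≤ 1)]
    refine (ae_restrict_iff' measurableSet_Ioc).mpr ?_
    filter_upwards with x hx
    rw [Real.norm_eq_abs, abs_of_nonneg (by positivity)]
    exact abs_log_le_rpow hx.1 hx.2 hk

lemma h_int_neg {a : ℝ} (ha : a ≤ 0) :
    IntervalIntegrable (fun s => Real.log (1-s)/s) volume a 0 := by
  apply IntervalIntegrable.mono_fun' (g := fun _ => (1:ℝ)) (_root_.intervalIntegrable_const)
    measurable_h.aestronglyMeasurable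
  rw [uIoc_of_le ha]
  refine (ae_restrict_iff' measurableSet_Ioc).mpr ?_
  filter_upwards with x hx
  exact h_bound_neg hx.2

lemma h_int_posx {x : ℝ} (h0 : 0 ≤ x) (hx : x < 1) :
    IntervalIntegrable (fun s => Real.log (1-s)/s) volume 0 x := by
  apply IntervalIntegrable.mono_fun' (g := fun _ => ((1-x)⁻¹:ℝ)) (_root_.intervalIntegrable_const)
    measurable_h.aestronglyMeasurable
  rw [uIoc_of_le h0]
  refine (ae_restrict_iff' measurableSet_Ioc).mpr ?_
  filter_upwards with s hs
  exact h_bound_pos hs.1.le hs.2 hx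

lemma log_comp_int : IntervalIntegrable (fun s : ℝ => 2*|Real.log (1-s)| + 2) volume 0 1 := by
  have base : IntervalIntegrable (fun u : ℝ => 2*|Real.log u| + 2) volume 0 1 := by
    have := ((intInt_abs_log_pow 1).const_mul 2).add
      (_root_.intervalIntegrable_const (c := (2:ℝ)) (μ := volume) (a := 0) (b := 1))
    simpa using this
  have := (base.comp_sub_left 1).symm
  simpa using this

lemma h_int_one : IntervalIntegrable (fun s => Real.log (1-s)/s) volume 0 1 := by
  apply IntervalIntegrable.mono_fun' (g := fun s => 2*|Real.log (1-s)| + 2) log_comp_int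
    measurable_h.aestronglyMeasurable
  rw [uIoc_of_le (by norm_num : (0:ℝ) ≤ 1)]
  refine (ae_restrict_iff' measurableSet_Ioc).mpr ?_
  filter_upwards with s hs
  rcases le_or_gt s (1/2) with hhalf | hhalf
  · have := h_bound_pos hs.1.le hhalf (by norm_num : (1:ℝ)/2 < 1)
    rw [Real.norm_eq_abs]
    have h2 : ((1:ℝ) - 1/2)⁻¹ = 2 := by norm_num
    rw [h2] at this
    have : (0:ℝ) ≤ |Real.log (1-s)| := abs_nonneg _
    linarith [h_bound_pos hs.1.le hhalf (by norm_num : (1:ℝ)/2 < 1), h2 ▸ (h_bound_pos hs.1.le hhalf (by norm_num : (1:ℝ)/2 < 1))]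
  · rw [Real.norm_eq_abs, abs_div, abs_of_pos (lt_trans (by norm_num) hhalf)]
    have hs0 : (0:ℝ) < s := lt_trans (by norm_num) hhalf
    have : |Real.log (1-s)| / s ≤ |Real.log (1-s)| * 2 := by
      rw [div_le_iff₀ hs0]
      have h1 : (1:ℝ) ≤ 2 * s := by linarith
      nlinarith [abs_nonneg (Real.log (1-s))]
    linarith

/-- The dilogarithm, defined by `Li₂(x) = -∫₀ˣ log(1-s)/s ds`. -/
noncomputable def Li2 (x : ℝ) : ℝ := -∫ s in (0:ℝ)..x, Real.log (1 - s) / s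

lemma Li2_zero : Li2 0 = 0 := by simp [Li2]

lemma h_int_to {x : ℝ} (hx : x ≤ 1) :
    IntervalIntegrable (fun s => Real.log (1-s)/s) volume 0 x := by
  rcases le_or_gt x 0 with h | h
  · exact (h_int_neg h).symm
  · rcases lt_or_eq_of_le hx with h1 | rfl
    · exact h_int_posx h.le h1
    · exact h_int_one

lemma Li2_hasDerivAt {x : ℝ} (hx : x < 1) (hx0 : x ≠ 0) :
    HasDerivAt Li2 (-(Real.log (1-x)/x)) x := by
  have hcont : ContinuousAt (fun s : ℝ => Real.log (1-s)/s) x := by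
    have h1 : ContinuousAt (fun s : ℝ => Real.log (1-s)) x :=
      ContinuousAt.comp (Real.continuousAt_log (by intro hc; rw [sub_eq_zero] at hc; exact absurd hc.symm (ne_of_lt hx)))
        ((continuous_const.sub continuous_id).continuousAt)
    exact h1.div continuousAt_id hx0
  have := intervalIntegral.integral_hasDerivAt_right (h_int_to hx.le)
    (measurable_h.stronglyMeasurable.stronglyMeasurableAtFilter) hcont
  exact this.neg

lemma Li2_contOn {a : ℝ} (ha : a ≤ 0) : ContinuousOn Li2 (Icc a 1) := by
  have hint : IntervalIntegrable (fun s => Real.log (1-s)/s) volume a 1 :=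
    (h_int_neg ha).trans h_int_one
  have h0m : (0:ℝ) ∈ Set.uIcc a 1 := by
    rw [uIcc_of_le (ha.trans zero_le_one)]
    exact ⟨ha, zero_le_one⟩
  have := (intervalIntegral.continuousOn_primitive_interval' hint h0m).neg
  rw [uIcc_of_le (ha.trans zero_le_one)] at this
  exact this

lemma Li2_bound : ∃ C : ℝ, ∀ x ∈ Icc (0:ℝ) 1, |Li2 x| ≤ C := by
  have := (isCompact_Icc (a := (0:ℝ)) (b := 1)).exists_bound_of_continuousOn (Li2_contOn le_rfl)
  simpa [Real.norm_eq_abs] using this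


lemma landen {u : ℝ} (hu0 : 0 < u) (hu1 : u ≤ 1) :
    Li2 (-(1-u)/u) = -Li2 (1-u) - (Real.log u)^2/2 := by
  set g : ℝ → ℝ := fun v => Li2 (-(1-v)/v) + Li2 (1-v) + (Real.log v)^2/2 with hg
  have hcont : ContinuousOn g (Icc u 1) := by
    have hu0' : ∀ v ∈ Icc u 1, v ≠ 0 := fun v hv => (lt_of_lt_of_le hu0 hv.1).ne'
    have hinner : ContinuousOn (fun v : ℝ => -(1-v)/v) (Icc u 1) :=
      ((continuous_const.sub continuous_id).neg.continuousOn).div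
        continuous_id.continuousOn hu0'
    have ha : -(1-u)/u ≤ 0 := div_nonpos_of_nonpos_of_nonneg (by linarith) hu0.le
    have c1 : ContinuousOn (fun v : ℝ => Li2 (-(1-v)/v)) (Icc u 1) := by
      apply (Li2_contOn ha).comp hinner
      intro v hv
      have hv0 : 0 < v := lt_of_lt_of_le hu0 hv.1
      constructor
      · rw [div_le_div_iff₀ hu0 hv0]
        nlinarith [hv.1]
      · have : -(1-v)/v ≤ 0 := div_nonpos_of_nonpos_of_nonneg (by linarith [hv.2]) hv0.le
        linarith
    have c2 : ContinuousOn (fun v : ℝ => Li2 (1-v)) (Icc u 1) := by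
      apply (Li2_contOn (le_refl 0)).comp (continuous_const.sub continuous_id).continuousOn
      intro v hv
      exact ⟨by simpa using hv.2, by simpa using hu0.le.trans hv.1⟩
    have c3 : ContinuousOn (fun v : ℝ => (Real.log v)^2/2) (Icc u 1) :=
      (((Real.continuousOn_log.mono (fun v hv => hu0' v hv)).pow 2).div_const 2)
    exact (c1.add c2).add c3
  have hderiv : ∀ x ∈ Ico u 1, HasDerivWithinAt g 0 (Ici x) x := by
    intro x hx
    have hx0 : 0 < x := lt_of_lt_of_le hu0 hx.1
    have hx1 : x < 1 := hx.2
    have h1x : 0 < 1 - x := by linarith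
    set y : ℝ := -(1-x)/x with hy
    have hyneg : y < 0 := div_neg_of_neg_of_pos (by linarith) hx0
    have hy1 : y < 1 := by linarith
    have hy0 : y ≠ 0 := hyneg.ne
    have dnum : HasDerivAt (fun v : ℝ => -(1-v)) (-(0-1)) x :=
      ((hasDerivAt_const x (1:ℝ)).sub (hasDerivAt_id x)).neg
    have dinner : HasDerivAt (fun v : ℝ => -(1-v)/v)
        ((-(0-1) * x - (-(1-x)) * 1) / x^2) x :=
      dnum.div (hasDerivAt_id x) hx0.ne'
    have D1 : HasDerivAt (fun v : ℝ => Li2 (-(1-v)/v))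
        ((-(Real.log (1-y)/y)) * ((-(0-1) * x - (-(1-x)) * 1) / x^2)) x :=
      HasDerivAt.comp (h₂ := Li2) (h := fun v : ℝ => -(1-v)/v) x (Li2_hasDerivAt hy1 hy0) dinner
    have dinner2 : HasDerivAt (fun v : ℝ => 1 - v) (0-1) x :=
      (hasDerivAt_const x (1:ℝ)).sub (hasDerivAt_id x)
    have D2 : HasDerivAt (fun v : ℝ => Li2 (1-v))
        ((-(Real.log (1-(1-x))/(1-x))) * (0-1)) x :=
      (Li2_hasDerivAt (by linarith) h1x.ne').comp x dinner2
    have D3 : HasDerivAt (fun v : ℝ => (Real.log v)^2/2)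
        ((↑2 * Real.log x ^ (2-1) * x⁻¹)/2) x :=
      ((Real.hasDerivAt_log hx0.ne').pow 2).div_const 2
    have htot := (D1.add D2).add D3
    have hE : (-(Real.log (1-y)/y)) * ((-(0-1) * x - (-(1-x)) * 1) / x^2)
        + (-(Real.log (1-(1-x))/(1-x))) * (0-1)
        + (↑2 * Real.log x ^ (2-1) * x⁻¹)/2 = 0 := by
      have e1 : 1 - y = x⁻¹ := by rw [hy]; field_simp; ring
      have e2 : 1 - (1-x) = x := by ring
      rw [e1, e2, Real.log_inv, hy]
      have hne : x ≠ 0 := hx0.ne'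
      have hne2 : (1:ℝ) - x ≠ 0 := h1x.ne'
      field_simp
      have h3 : -x^2 + x^3 ≠ 0 := by
        intro hc
        have : x^2 * (x - 1) = 0 := by linarith [hc]
        rcases mul_eq_zero.mp this with h | h
        · exact hne (pow_eq_zero_iff (n := 2) (by norm_num) |>.mp h)
        · exact hx1.ne (by linarith)
      have h4 : (-x^2 + x^3) * (-x^2 + x^3)⁻¹ = 1 := mul_inv_cancel₀ h3
      rw [show (2:ℕ) - 1 = 1 from rfl, pow_one]; ring
    rw [hE] at htot
    exact htot.hasDerivWithinAt
  have key := constant_of_has_deriv_right_zero hcont hderiv 1 ⟨hu1, le_rfl⟩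
  have hg1 : g 1 = 0 := by simp [hg, Li2_zero]
  have hgu : g u = 0 := by rw [← key, hg1]
  have := hgu
  simp only [hg] at this
  linarith


lemma sum_shift2 : HasSum (fun n : ℕ => 1/((n:ℝ)+1)^2) (π^2/6) := by
  have h2 : HasSum (fun n : ℕ => 1/(n:ℝ)^2) (π^2/6 + ∑ i ∈ Finset.range 1, 1/(i:ℝ)^2) := by
    simpa using hasSum_zeta_two
  have := (hasSum_nat_add_iff (f := fun n : ℕ => 1/(n:ℝ)^2) 1).mpr h2
  have hc : ∀ n : ℕ, 1/((n:ℝ)+1)^2 = 1/(((n+1:ℕ)):ℝ)^2 := by intro n; push_cast; ring_nf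
  simpa [hc] using this

lemma sum_shift4 : HasSum (fun n : ℕ => 1/((n:ℝ)+1)^4) (π^4/90) := by
  have h2 : HasSum (fun n : ℕ => 1/(n:ℝ)^4) (π^4/90 + ∑ i ∈ Finset.range 1, 1/(i:ℝ)^4) := by
    simpa using hasSum_zeta_four
  have := (hasSum_nat_add_iff (f := fun n : ℕ => 1/(n:ℝ)^4) 1).mpr h2
  have hc : ∀ n : ℕ, 1/((n:ℝ)+1)^4 = 1/(((n+1:ℕ)):ℝ)^4 := by intro n; push_cast; ring_nf
  simpa [hc] using this

lemma mono_int (n : ℕ) : ∫ s in Ioo (0:ℝ) 1, s^n = 1/((n:ℝ)+1) := by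
  rw [← MeasureTheory.integral_Ioc_eq_integral_Ioo,
    ← intervalIntegral.integral_of_le zero_le_one, integral_pow]
  simp

lemma moment3 (n : ℕ) : ∫ u in Ioo (0:ℝ) 1, (-Real.log u)^3 * u^n = 6/((n:ℝ)+1)^4 := by
  have hderiv : ∀ t ∈ Ioi (0:ℝ),
      HasDerivWithinAt (fun t : ℝ => Real.exp (-t)) (-Real.exp (-t)) (Ioi 0) t := by
    intro t _
    have : HasDerivAt (fun t : ℝ => Real.exp (-t)) (Real.exp (-t) * (-1)) t :=
      (Real.hasDerivAt_exp (-t)).comp t ((hasDerivAt_id t).neg)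
    simpa [mul_comm] using this.hasDerivWithinAt
  have hinj : InjOn (fun t : ℝ => Real.exp (-t)) (Ioi 0) := by
    intro a _ b _ hab
    have := Real.exp_eq_exp.mp hab
    linarith
  have himg : (fun t : ℝ => Real.exp (-t)) '' (Ioi 0) = Ioo 0 1 := by
    ext u
    constructor
    · rintro ⟨t, ht, rfl⟩
      refine ⟨Real.exp_pos _, ?_⟩
      rw [← Real.exp_zero]
      exact Real.exp_lt_exp.mpr (by simpa using ht)
    · rintro ⟨h0, h1⟩
      refine ⟨-Real.log u, ?_, ?_⟩
      · simpa using Real.log_neg h0 h1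
      · simp [Real.exp_log h0]
  rw [← himg, integral_image_eq_integral_abs_deriv_smul measurableSet_Ioi hderiv hinj]
  have : (∫ t in Ioi (0:ℝ), |-Real.exp (-t)| •
      ((-Real.log (Real.exp (-t)))^3 * (Real.exp (-t))^n))
      = ∫ t in Ioi (0:ℝ), t ^ ((4:ℝ)-1) * Real.exp (-(((n:ℝ)+1)*t)) := by
    apply setIntegral_congr_fun measurableSet_Ioi
    intro t ht
    dsimp only
    rw [Real.log_exp, abs_neg, abs_of_pos (Real.exp_pos _), smul_eq_mul]
    have h1 : ((4:ℝ)-1) = ((3:ℕ):ℝ) := by norm_num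
    rw [h1, Real.rpow_natCast]
    rw [neg_neg, mul_comm (Real.exp (-t)) _, mul_assoc, ← Real.exp_nat_mul, ← Real.exp_add]
    congr 2
    push_cast
    ring
  rw [this, integral_rpow_mul_exp_neg_mul_Ioi (by norm_num : (0:ℝ) < 4)
    (by positivity : (0:ℝ) < (n:ℝ)+1)]
  have hG : Real.Gamma 4 = 6 := by
    rw [show (4:ℝ) = ((3:ℕ):ℝ)+1 by norm_num, Real.Gamma_nat_eq_factorial]
    norm_num [Nat.factorial]
  rw [hG]
  have h4 : ((4:ℝ)) = ((4:ℕ):ℝ) := by norm_num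
  rw [h4, Real.rpow_natCast]
  have hne : ((n:ℝ)+1) ≠ 0 := by positivity
  field_simp

lemma Li2_one_aux : ∫ s in Ioo (0:ℝ) 1, Real.log (1-s)/s = -(π^2/6) := by
  set F : ℕ → ℝ → ℝ := fun n s => -(s^n/((n:ℝ)+1)) with hF
  have hFint : ∀ n : ℕ, Integrable (F n) (volume.restrict (Ioo 0 1)) := by
    intro n
    have hc : Continuous (F n) := by
      rw [hF]; fun_prop
    exact (hc.integrableOn_Icc (a := 0) (b := 1)).mono_set Ioo_subset_Icc_self
  have hval : ∀ n : ℕ, ∫ s in Ioo (0:ℝ) 1, F n s = -(1/((n:ℝ)+1)^2) := by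
    intro n
    rw [hF]
    simp only
    rw [MeasureTheory.integral_neg]
    have : ∀ s : ℝ, s^n/((n:ℝ)+1) = s^n * (1/((n:ℝ)+1)) := fun s => by ring
    simp_rw [this, MeasureTheory.integral_mul_const, mono_int]
    have hne : ((n:ℝ)+1) ≠ 0 := by positivity
    field_simp
  have hnorm : ∀ n : ℕ, ∫ s in Ioo (0:ℝ) 1, ‖F n s‖ = 1/((n:ℝ)+1)^2 := by
    intro n
    have heq : ∀ s ∈ Ioo (0:ℝ) 1, ‖F n s‖ = s^n * (1/((n:ℝ)+1)) := by
      intro s hs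
      rw [hF]
      simp only [Real.norm_eq_abs, abs_neg, abs_div]
      rw [abs_of_nonneg (pow_nonneg hs.1.le n), abs_of_pos (by positivity : (0:ℝ) < (n:ℝ)+1)]
      ring
    rw [setIntegral_congr_fun measurableSet_Ioo heq, MeasureTheory.integral_mul_const, mono_int]
    have hne : ((n:ℝ)+1) ≠ 0 := by positivity
    field_simp
  have hsum : Summable (fun n : ℕ => ∫ s in Ioo (0:ℝ) 1, ‖F n s‖) := by
    apply Summable.congr sum_shift2.summable
    intro n
    exact (hnorm n).symm
  have swap := MeasureTheory.integral_tsum_of_summable_integral_norm hFint hsum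
  have hpt : ∀ s ∈ Ioo (0:ℝ) 1, (∑' n : ℕ, F n s) = Real.log (1-s)/s := by
    intro s hs
    have habs : |s| < 1 := by rw [abs_of_pos hs.1]; exact hs.2
    have h1 := Real.hasSum_pow_div_log_of_abs_lt_one habs
    have h2 := h1.div_const s
    have h3 : (fun n : ℕ => s^(n+1)/((n:ℝ)+1)/s) = fun n : ℕ => s^n/((n:ℝ)+1) := by
      funext n
      rw [pow_succ]
      field_simp [hs.1.ne']
    rw [h3] at h2
    have h4 := h2.neg
    rw [h4.tsum_eq]
    field_simp
  calc ∫ s in Ioo (0:ℝ) 1, Real.log (1-s)/s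
      = ∫ s in Ioo (0:ℝ) 1, (∑' n : ℕ, F n s) := by
        apply setIntegral_congr_fun measurableSet_Ioo
        intro s hs
        exact (hpt s hs).symm
    _ = ∑' n : ℕ, ∫ s in Ioo (0:ℝ) 1, F n s := swap.symm
    _ = ∑' n : ℕ, -(1/((n:ℝ)+1)^2) := by
        apply tsum_congr
        intro n
        exact hval n
    _ = -(π^2/6) := sum_shift2.neg.tsum_eq

lemma intK_aux : ∫ u in Ioo (0:ℝ) 1, (Real.log u)^3/(1-u) = -(π^4/15) := by
  set F : ℕ → ℝ → ℝ := fun n u => (Real.log u)^3 * u^n with hF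
  have hlogint : IntegrableOn (fun u : ℝ => |Real.log u|^3) (Ioo 0 1) volume := by
    have := (intervalIntegrable_iff_integrableOn_Ioc_of_le zero_le_one).mp (intInt_abs_log_pow 3)
    exact this.mono_set Ioo_subset_Ioc_self
  have hFint : ∀ n : ℕ, Integrable (F n) (volume.restrict (Ioo 0 1)) := by
    intro n
    apply Integrable.mono' hlogint
    · exact (((Real.measurable_log.pow_const 3).mul (measurable_id.pow_const n))).aestronglyMeasurable
    · refine (ae_restrict_iff' measurableSet_Ioo).mpr ?_
      filter_upwards with u hu
      rw [hF]
      simp only [Real.norm_eq_abs, abs_mul, abs_pow]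
      have h1 : |u|^n ≤ 1 := by
        apply pow_le_one₀ (abs_nonneg u)
        rw [abs_of_pos hu.1]; exact hu.2.le
      nlinarith [pow_nonneg (abs_nonneg (Real.log u)) 3, abs_nonneg u]
  have habs : ∀ n : ℕ, ∀ u ∈ Ioo (0:ℝ) 1, ‖F n u‖ = (-Real.log u)^3 * u^n := by
    intro n u hu
    rw [hF]
    simp only [Real.norm_eq_abs, abs_mul, abs_pow]
    rw [abs_of_nonpos (Real.log_nonpos hu.1.le hu.2.le), abs_of_pos hu.1]
  have hnorm : ∀ n : ℕ, ∫ u in Ioo (0:ℝ) 1, ‖F n u‖ = 6/((n:ℝ)+1)^4 := by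
    intro n
    rw [setIntegral_congr_fun measurableSet_Ioo (habs n), moment3]
  have hsum : Summable (fun n : ℕ => ∫ u in Ioo (0:ℝ) 1, ‖F n u‖) := by
    apply Summable.congr ((sum_shift4.mul_left 6).summable)
    intro n
    rw [hnorm n]
    ring
  have swap := MeasureTheory.integral_tsum_of_summable_integral_norm hFint hsum
  have hval : ∀ n : ℕ, ∫ u in Ioo (0:ℝ) 1, F n u = -(6/((n:ℝ)+1)^4) := by
    intro n
    have heq : ∀ u ∈ Ioo (0:ℝ) 1, F n u = -((-Real.log u)^3 * u^n) := by
      intro u hu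
      rw [hF]; ring
    rw [setIntegral_congr_fun measurableSet_Ioo heq, MeasureTheory.integral_neg, moment3]
  have hpt : ∀ u ∈ Ioo (0:ℝ) 1, (∑' n : ℕ, F n u) = (Real.log u)^3/(1-u) := by
    intro u hu
    rw [hF]
    simp only
    rw [tsum_mul_left, tsum_geometric_of_lt_one hu.1.le hu.2]
    rw [div_eq_mul_inv]
  calc ∫ u in Ioo (0:ℝ) 1, (Real.log u)^3/(1-u)
      = ∫ u in Ioo (0:ℝ) 1, (∑' n : ℕ, F n u) := by
        apply setIntegral_congr_fun measurableSet_Ioo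
        intro u hu
        exact (hpt u hu).symm
    _ = ∑' n : ℕ, ∫ u in Ioo (0:ℝ) 1, F n u := swap.symm
    _ = ∑' n : ℕ, -(6 * (1/((n:ℝ)+1)^4)) := by
        apply tsum_congr
        intro n
        rw [hval n]
        ring
    _ = -(π^4/15) := by
        rw [(sum_shift4.mul_left 6).neg.tsum_eq]
        ring

lemma Li2_one : Li2 1 = π^2/6 := by
  unfold Li2
  rw [intervalIntegral.integral_of_le zero_le_one, MeasureTheory.integral_Ioc_eq_integral_Ioo,
    Li2_one_aux]
  ring

lemma intK : ∫ u in (0:ℝ)..1, (Real.log u)^3/(1-u) = -(π^4/15) := by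
  rw [intervalIntegral.integral_of_le zero_le_one, MeasureTheory.integral_Ioc_eq_integral_Ioo]
  exact intK_aux

lemma base_int : IntervalIntegrable (fun u : ℝ => 2*|Real.log u| + 2) volume 0 1 := by
  have := ((intInt_abs_log_pow 1).const_mul 2).add
    (_root_.intervalIntegrable_const (c := (2:ℝ)) (μ := volume) (a := 0) (b := 1))
  simpa using this

lemma log_div_one_sub_bound {u : ℝ} (hu : 1/2 < u) (h1 : u < 1) :
    |Real.log u| / (1-u) ≤ 2 := by
  have hu0 : (0:ℝ) < u := by linarith
  have h1u : (0:ℝ) < 1 - u := by linarith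
  have habs : |Real.log u| = -Real.log u := abs_of_nonpos (Real.log_nonpos hu0.le h1.le)
  have hlog : -Real.log u ≤ (1-u)/u := by
    have := Real.log_le_sub_one_of_pos (inv_pos.mpr hu0)
    rw [Real.log_inv] at this
    have he : u⁻¹ - 1 = (1-u)/u := by field_simp
    linarith [he ▸ this]
  rw [habs, div_le_iff₀ h1u]
  have : (1-u)/u ≤ 2*(1-u) := by
    rw [div_le_iff₀ hu0]
    nlinarith
  linarith

lemma A_kernel_bound {u : ℝ} (h0 : 0 < u) (h1 : u ≤ 1) :
    |Real.log u/(1-u)| ≤ 2*|Real.log u| + 2 := by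
  rcases eq_or_lt_of_le h1 with rfl | h1
  · simp
  rcases le_or_gt u (1/2) with hh | hh
  · have h1u : (1:ℝ)/2 ≤ 1 - u := by linarith
    rw [abs_div, abs_of_pos (by linarith : (0:ℝ) < 1 - u)]
    have : |Real.log u| / (1-u) ≤ |Real.log u| * 2 := by
      rw [div_le_iff₀ (by linarith : (0:ℝ) < 1 - u)]
      nlinarith [abs_nonneg (Real.log u)]
    linarith [abs_nonneg (Real.log u)]
  · rw [abs_div, abs_of_pos (by linarith : (0:ℝ) < 1 - u)]
    have := log_div_one_sub_bound hh h1
    linarith [abs_nonneg (Real.log u)]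

lemma step3 : ∫ v in (0:ℝ)..1, Real.log (1-v)/v * Li2 v = -((π^2/6)^2/2) := by
  obtain ⟨C, hC⟩ := Li2_bound
  have hC0 : 0 ≤ C := le_trans (abs_nonneg _) (hC 0 ⟨le_rfl, zero_le_one⟩)
  have hiou : Set.uIoc (0:ℝ) 1 = Set.Ioc (0:ℝ) 1 := uIoc_of_le zero_le_one
  have hint : IntervalIntegrable (fun v => Real.log (1-v)/v * Li2 v) volume 0 1 := by
    refine IntervalIntegrable.mono_fun'
      (g := fun v => (2*|Real.log (1-v)| + 2) * C) (log_comp_int.mul_const C) ?_ ?_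
    · rw [hiou]
      exact measurable_h.aestronglyMeasurable.mul
        (((Li2_contOn le_rfl).mono Ioc_subset_Icc_self).aestronglyMeasurable measurableSet_Ioc)
    rw [hiou]
    refine (ae_restrict_iff' measurableSet_Ioc).mpr ?_
    filter_upwards with v hv
    rw [Real.norm_eq_abs, abs_mul]
    apply mul_le_mul
    · -- |log(1-v)/v| ≤ 2|log(1-v)|+2
      rcases eq_or_lt_of_le hv.2 with rfl | hv1
      · simp
      rcases le_or_gt v (1/2) with hhalf | hhalf
      · have := h_bound_pos hv.1.le hhalf (by norm_num : (1:ℝ)/2 < 1)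
        have h2 : ((1:ℝ) - 1/2)⁻¹ = 2 := by norm_num
        rw [h2] at this
        linarith [abs_nonneg (Real.log (1-v))]
      · rw [abs_div, abs_of_pos hv.1]
        have : |Real.log (1-v)| / v ≤ |Real.log (1-v)| * 2 := by
          rw [div_le_iff₀ hv.1]
          nlinarith [abs_nonneg (Real.log (1-v))]
        linarith
    · exact hC v ⟨hv.1.le, hv.2⟩
    · exact abs_nonneg _
    · positivity
  have hcont : ContinuousOn (fun v => -(Li2 v)^2/2) (Icc 0 1) :=
    (((Li2_contOn le_rfl).pow 2).neg).div_const 2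
  have hderiv : ∀ x ∈ Ioo (0:ℝ) 1,
      HasDerivWithinAt (fun v => -(Li2 v)^2/2) (Real.log (1-x)/x * Li2 x) (Ioi x) x := by
    intro x hx
    have hd := ((Li2_hasDerivAt hx.2 hx.1.ne').pow 2).neg.div_const 2
    have hd2 : HasDerivAt (fun v => -(Li2 v)^2/2) (Real.log (1-x)/x * Li2 x) x := by
      exact hd.congr_deriv (by push_cast; ring)
    exact hd2.hasDerivWithinAt
  have := intervalIntegral.integral_eq_sub_of_hasDeriv_right_of_le zero_le_one hcont hderiv hint
  rw [this, Li2_one, Li2_zero]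
  ring

lemma intA : IntervalIntegrable (fun u => Real.log u/(1-u) * Li2 (1-u)) volume 0 1 := by
  obtain ⟨C, hC⟩ := Li2_bound
  have hC0 : 0 ≤ C := le_trans (abs_nonneg _) (hC 0 ⟨le_rfl, zero_le_one⟩)
  have hiou : Set.uIoc (0:ℝ) 1 = Set.Ioc (0:ℝ) 1 := uIoc_of_le zero_le_one
  refine IntervalIntegrable.mono_fun'
    (g := fun u => (2*|Real.log u| + 2) * C) (base_int.mul_const C) ?_ ?_
  · rw [hiou]
    have hcont : ContinuousOn (fun u : ℝ => Li2 (1-u)) (Icc 0 1) := by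
      apply (Li2_contOn le_rfl).comp (continuous_const.sub continuous_id).continuousOn
      intro v hv
      exact ⟨by simpa using hv.2, by simpa using hv.1⟩
    have hms : AEStronglyMeasurable (fun u : ℝ => Li2 (1-u)) (volume.restrict (Ioc 0 1)) :=
      (hcont.mono Ioc_subset_Icc_self).aestronglyMeasurable measurableSet_Ioc
    exact ((Real.measurable_log.div (measurable_const.sub measurable_id)).aestronglyMeasurable).mul hms
  rw [hiou]
  refine (ae_restrict_iff' measurableSet_Ioc).mpr ?_
  filter_upwards with u hu
  rw [Real.norm_eq_abs, abs_mul]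
  apply mul_le_mul (A_kernel_bound hu.1 hu.2) (hC _ ⟨by linarith [hu.2], by linarith [hu.1]⟩)
    (abs_nonneg _) (by positivity)

lemma intB : IntervalIntegrable (fun u => (Real.log u)^3/(1-u)) volume 0 1 := by
  have hg : IntervalIntegrable (fun u : ℝ => 2*|Real.log u|^3 + 2) volume 0 1 := by
    exact ((intInt_abs_log_pow 3).const_mul 2).add
      (_root_.intervalIntegrable_const (c := (2:ℝ)) (μ := volume) (a := 0) (b := 1))
  refine IntervalIntegrable.mono_fun' (g := fun u : ℝ => 2*|Real.log u|^3 + 2) hg ?_ ?_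
  · exact ((Real.measurable_log.pow_const 3).div
      (measurable_const.sub measurable_id)).aestronglyMeasurable
  rw [uIoc_of_le (zero_le_one)]
  refine (ae_restrict_iff' measurableSet_Ioc).mpr ?_
  filter_upwards with u hu
  rw [Real.norm_eq_abs, abs_div, abs_pow]
  rcases eq_or_lt_of_le hu.2 with rfl | h1
  · simp
  have h1u : (0:ℝ) < 1 - u := by linarith
  rw [abs_of_pos h1u]
  rcases le_or_gt u (1/2) with hh | hh
  · have : |Real.log u|^3 / (1-u) ≤ |Real.log u|^3 * 2 := by
      rw [div_le_iff₀ h1u]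
      nlinarith [pow_nonneg (abs_nonneg (Real.log u)) 3]
    linarith [pow_nonneg (abs_nonneg (Real.log u)) 3]
  · have hb := log_div_one_sub_bound hh h1
    have hlog1 : |Real.log u| ≤ 1 := by
      have habs : |Real.log u| = -Real.log u := abs_of_nonpos (Real.log_nonpos hu.1.le h1.le)
      have := Real.log_le_sub_one_of_pos (inv_pos.mpr hu.1)
      rw [Real.log_inv] at this
      have hinv : u⁻¹ ≤ 2 := by
        rw [inv_le_comm₀ hu.1 (by norm_num)]
        linarith
      rw [habs]
      linarith
    have key : |Real.log u|^3/(1-u) = (|Real.log u|/(1-u)) * |Real.log u|^2 := by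
      ring
    have h2 : |Real.log u|^2 ≤ 1 := by nlinarith [abs_nonneg (Real.log u)]
    have h3 : (|Real.log u|/(1-u)) * |Real.log u|^2 ≤ 2 * 1 := by
      apply mul_le_mul hb h2 (by positivity) (by norm_num)
    rw [key]
    nlinarith [pow_nonneg (abs_nonneg (Real.log u)) 3]

theorem stmt_16 :
    ((∫ u in (0:ℝ)..1, Real.log u / (1 - u) * Li2 (-(1 - u) / u) : ℝ) : ℂ) =
      (17 / 4) * riemannZeta 4 := by
  have hsplit : ∀ u ∈ Set.uIcc (0:ℝ) 1,
      Real.log u / (1 - u) * Li2 (-(1 - u) / u)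
        = -(Real.log u/(1-u) * Li2 (1-u)) - (Real.log u)^3/(1-u)/2 := by
    rw [uIcc_of_le zero_le_one]
    intro u hu
    rcases eq_or_lt_of_le hu.1 with rfl | h0
    · simp
    · rw [landen h0 hu.2]
      ring
  have hAJ : (∫ u in (0:ℝ)..1, Real.log u/(1-u) * Li2 (1-u))
      = ∫ v in (0:ℝ)..1, Real.log (1-v)/v * Li2 v := by
    have he : ∀ u ∈ Set.uIcc (0:ℝ) 1,
        Real.log u/(1-u) * Li2 (1-u)
          = (fun v => Real.log (1-v)/v * Li2 v) (1 - u) := by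
      intro u _
      simp [sub_sub_cancel]
    rw [intervalIntegral.integral_congr he,
      intervalIntegral.integral_comp_sub_left (fun v => Real.log (1-v)/v * Li2 v) 1]
    norm_num
  have hreal : (∫ u in (0:ℝ)..1, Real.log u / (1 - u) * Li2 (-(1 - u) / u))
      = 17*π^4/360 := by
    have hAneg : IntervalIntegrable (fun u => -(Real.log u/(1-u) * Li2 (1-u))) volume 0 1 :=
      intA.neg
    have hB2 : IntervalIntegrable (fun u => (Real.log u)^3/(1-u)/2) volume 0 1 :=
      intB.div_const 2
    rw [intervalIntegral.integral_congr hsplit,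
      intervalIntegral.integral_sub hAneg hB2]
    have e1 : (∫ u in (0:ℝ)..1, -(Real.log u/(1-u) * Li2 (1-u)))
        = -(∫ u in (0:ℝ)..1, Real.log u/(1-u) * Li2 (1-u)) := by
      rw [intervalIntegral.integral_neg]
    have e2 : (∫ u in (0:ℝ)..1, (Real.log u)^3/(1-u)/2)
        = (∫ u in (0:ℝ)..1, (Real.log u)^3/(1-u))/2 := by
      rw [intervalIntegral.integral_div]
    rw [e1, e2, hAJ, step3, intK]
    ring
  rw [hreal, riemannZeta_four]
  push_cast
  ring
end
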